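/- Let D be a digraph with at least one directed cycle, and let g and c be its girth and circumference, respectively. Then χ_A(D) ≤ ⌈(c − 1)/(g − 1)⌉ + 1. -/

import Mathlib

/-!
A digraph on a finite vertex type `V` is given by its arc relation `A : V → V → Prop`,
which is irreflexive (loopless).
-/

/-- `CycleOn A U ℓ` : there is a directed cycle of length `ℓ` (a sequence of `ℓ` distinct
vertices, cyclically consecutive ones joined by arcs) all of whose vertices lie in `U`. -/
def CycleOn {V : Type*} (A : V → V → Prop) (U : Set V) (ℓ : ℕ) : Prop :=
  2 ≤ ℓ ∧ ∃ u : ZMod ℓ → V, Function.Injective u ∧ (∀ i, u i ∈ U) ∧ ∀ i, A (u i) (u (i + 1))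

/-- `HasCycleLen A ℓ` : the digraph has a directed cycle of length `ℓ`. -/
def HasCycleLen {V : Type*} (A : V → V → Prop) (ℓ : ℕ) : Prop :=
  CycleOn A Set.univ ℓ

/-- A set of vertices is acyclic if the induced subdigraph has no directed cycle. -/
def AcyclicSet {V : Type*} (A : V → V → Prop) (U : Set V) : Prop :=
  ∀ ℓ, ¬ CycleOn A U ℓ

/-- The dichromatic number: the least `k` such that the vertices can be colored with `k`
colors so that every color class is acyclic. -/
noncomputable def dichromatic {V : Type*} (A : V → V → Prop) : ℕ :=
  sInf {k | ∃ c : V → Fin k, ∀ i, AcyclicSet A {v | c v = i}}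

/-- Strong connectivity: every vertex is reachable from every other by a directed path. -/
def StronglyConnected {V : Type*} (A : V → V → Prop) : Prop :=
  ∀ u v, Relation.ReflTransGen A u v

open Relation Finset


section DFSdev

variable {V : Type*}

/-- Step of the descendant relation: `x` is the parent of `y`. -/
def DStep (S : Finset V) (par : V → V) (dep : V → ℕ) (x y : V) : Prop :=
  y ∈ S ∧ dep y ≠ 0 ∧ par y = x ∧ dep y = dep x + 1

/-- `y` is a descendant of `x` in the forest given by `par`/`dep` on `S`. -/
def DDesc (S : Finset V) (par : V → V) (dep : V → ℕ) : V → V → Prop :=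
  Relation.ReflTransGen (DStep S par dep)

lemma DDesc.mem_or {S : Finset V} {par : V → V} {dep : V → ℕ} {a u : V}
    (h : DDesc S par dep a u) : u = a ∨ u ∈ S := by
  induction h with
  | refl => exact Or.inl rfl
  | tail _ h2 _ => exact Or.inr h2.1

lemma DDesc.mono {S S' : Finset V} {par par' : V → V} {dep dep' : V → ℕ}
    (hstep : ∀ x y, DStep S par dep x y → DStep S' par' dep' x y) {a u : V}
    (h : DDesc S par dep a u) : DDesc S' par' dep' a u :=
  ReflTransGen.mono hstep _ _ h

/-- A DFS tree on the part of `W` reachable from `r`. -/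
structure DFS (A : V → V → Prop) (W : Finset V) (r : V) where
  S : Finset V
  idx : V → ℕ
  par : V → V
  dep : V → ℕ
  root_mem : r ∈ S
  subset : S ⊆ W
  closed : ∀ u ∈ S, ∀ v ∈ W, A u v → v ∈ S
  idx_inj : Set.InjOn idx S
  idx_root : idx r = 0
  idx_lt : ∀ v ∈ S, idx v < S.card
  dep_root : dep r = 0
  dep_eq_zero : ∀ v ∈ S, dep v = 0 → v = r
  parent : ∀ v ∈ S, dep v ≠ 0 → par v ∈ S ∧ A (par v) v ∧ dep v = dep (par v) + 1
  root_desc : ∀ v ∈ S, DDesc S par dep r v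
  key : ∀ a ∈ S, ∀ u v, DDesc S par dep a u → A u v → v ∈ W →
      DDesc S par dep a v ∨ idx v < idx a

/-- A DFS forest on `W`. -/
structure DFSForest (A : V → V → Prop) (W : Finset V) where
  idx : V → ℕ
  par : V → V
  dep : V → ℕ
  idx_inj : Set.InjOn idx W
  idx_lt : ∀ v ∈ W, idx v < W.card
  parent : ∀ v ∈ W, dep v ≠ 0 → par v ∈ W ∧ A (par v) v ∧ dep v = dep (par v) + 1
  key : ∀ a ∈ W, ∀ u v, DDesc W par dep a u → A u v → v ∈ W →
      DDesc W par dep a v ∨ idx v < idx a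

lemma dfs_exists [DecidableEq V] (A : V → V → Prop) :
    ∀ n (W : Finset V), W.card ≤ n → ∀ r ∈ W, Nonempty (DFS A W r) := by
  intro n
  induction n with
  | zero =>
      intro W hcard r hr
      exact absurd (Finset.card_pos.mpr ⟨r, hr⟩) (by omega)
  | succ n IH =>
      intro W hcard r hr
      by_cases hex : ∃ c, c ∈ W ∧ c ≠ r ∧ A r c
      · obtain ⟨c, hcW, hcr, hArc⟩ := hex
        -- first child subtree
        have hc1 : c ∈ W.erase r := Finset.mem_erase.mpr ⟨hcr, hcW⟩
        have hcard1 : (W.erase r).card ≤ n := by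
          rw [Finset.card_erase_of_mem hr]; omega
        obtain ⟨T₁⟩ := IH (W.erase r) hcard1 c hc1
        have hS₁W : T₁.S ⊆ W.erase r := T₁.subset
        have hrS₁ : r ∉ T₁.S := fun h => (Finset.mem_erase.mp (hS₁W h)).1 rfl
        have hcS₁ : c ∈ T₁.S := T₁.root_mem
        have hS₁sub : T₁.S ⊆ W := hS₁W.trans (Finset.erase_subset _ _)
        -- the rest of the tree
        have hrW' : r ∈ W \ T₁.S := Finset.mem_sdiff.mpr ⟨hr, hrS₁⟩
        have hcard2 : (W \ T₁.S).card ≤ n := by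
          have h1 : (W \ T₁.S).card = W.card - T₁.S.card := Finset.card_sdiff_of_subset hS₁sub
          have h2 : 0 < T₁.S.card := Finset.card_pos.mpr ⟨c, hcS₁⟩
          omega
        obtain ⟨T'⟩ := IH (W \ T₁.S) hcard2 r hrW'
        have hS'sub : T'.S ⊆ W \ T₁.S := T'.subset
        have hrS' : r ∈ T'.S := T'.root_mem
        have hdisj : ∀ x, x ∈ T'.S → x ∉ T₁.S := fun x hx =>
          (Finset.mem_sdiff.mp (hS'sub hx)).2
        have hS'W : T'.S ⊆ W := fun x hx => (Finset.mem_sdiff.mp (hS'sub hx)).1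
        set S : Finset V := T₁.S ∪ T'.S with hS
        set dep : V → ℕ := fun v => if v ∈ T₁.S then T₁.dep v + 1 else T'.dep v with hdep
        set par : V → V :=
          fun v => if v ∈ T₁.S then (if v = c then r else T₁.par v) else T'.par v with hpar
        set idx : V → ℕ :=
          fun v => if v = r then 0 else if v ∈ T₁.S then T₁.idx v + 1
            else T₁.S.card + T'.idx v with hidx
        have hmemS : ∀ v, v ∈ S → v ∈ T₁.S ∨ v ∈ T'.S := fun v hv => Finset.mem_union.mp hv
        have hrmem : r ∈ S := Finset.mem_union_right _ hrS'
        have hsubset : S ⊆ W := Finset.union_subset hS₁sub hS'W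
        have hdep1 : ∀ v ∈ T₁.S, dep v = T₁.dep v + 1 := fun v hv => if_pos hv
        have hdep' : ∀ v ∈ T'.S, dep v = T'.dep v := fun v hv => if_neg (hdisj v hv)
        -- idx values
        have hidxr : idx r = 0 := if_pos rfl
        have hidx1 : ∀ v ∈ T₁.S, idx v = T₁.idx v + 1 := by
          intro v hv
          have : v ≠ r := fun h => hrS₁ (h ▸ hv)
          simp only [hidx, if_neg this, if_pos hv]
        have hidx1' : ∀ v ∈ T₁.S, 1 ≤ idx v ∧ idx v ≤ T₁.S.card := by
          intro v hv
          rw [hidx1 v hv]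
          have := T₁.idx_lt v hv
          omega
        have hidx2 : ∀ v ∈ T'.S, v ≠ r → idx v = T₁.S.card + T'.idx v := by
          intro v hv hvr
          simp only [hidx, if_neg hvr, if_neg (hdisj v hv)]
        have hidx2' : ∀ v ∈ T'.S, v ≠ r → T₁.S.card + 1 ≤ idx v := by
          intro v hv hvr
          rw [hidx2 v hv hvr]
          have : T'.idx v ≠ 0 := by
            intro h0
            exact hvr (T'.idx_inj hv hrS' (by rw [h0, T'.idx_root]))
          omega
        -- closure
        have hclosed : ∀ u ∈ S, ∀ v ∈ W, A u v → v ∈ S := by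
          intro u hu v hv hA
          rcases hmemS u hu with hu1 | hu2
          · by_cases hvr : v = r
            · exact hvr ▸ hrmem
            · exact Finset.mem_union_left _
                (T₁.closed u hu1 v (Finset.mem_erase.mpr ⟨hvr, hv⟩) hA)
          · by_cases hvS₁ : v ∈ T₁.S
            · exact Finset.mem_union_left _ hvS₁
            · exact Finset.mem_union_right _
                (T'.closed u hu2 v (Finset.mem_sdiff.mpr ⟨hv, hvS₁⟩) hA)
        -- dep root facts
        have hdeproot : dep r = 0 := by
          rw [hdep]; simp only [if_neg hrS₁]; exact T'.dep_root
        have hdepzero : ∀ v ∈ S, dep v = 0 → v = r := by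
          intro v hv h0
          rcases hmemS v hv with h1 | h2
          · rw [hdep1 v h1] at h0; omega
          · exact T'.dep_eq_zero v h2 (by rwa [hdep' v h2] at h0)
        -- parent property
        have hparent : ∀ v ∈ S, dep v ≠ 0 →
            par v ∈ S ∧ A (par v) v ∧ dep v = dep (par v) + 1 := by
          intro v hv hv0
          rcases hmemS v hv with h1 | h2
          · by_cases hvc : v = c
            · subst hvc
              have hp : par v = r := by simp only [hpar, if_pos h1, if_pos rfl, if_true]
              rw [hp]
              refine ⟨hrmem, hArc, ?_⟩
              rw [hdep1 v h1, T₁.dep_root, hdeproot]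
            · have hd1 : T₁.dep v ≠ 0 := fun h => hvc (T₁.dep_eq_zero v h1 h)
              obtain ⟨hp1, hp2, hp3⟩ := T₁.parent v h1 hd1
              have hp : par v = T₁.par v := by simp only [hpar, if_pos h1, if_neg hvc]
              rw [hp]
              refine ⟨Finset.mem_union_left _ hp1, hp2, ?_⟩
              rw [hdep1 v h1, hdep1 _ hp1, hp3]
          · have hvn1 : v ∉ T₁.S := hdisj v h2
            have hd' : T'.dep v ≠ 0 := by rwa [hdep' v h2] at hv0
            obtain ⟨hp1, hp2, hp3⟩ := T'.parent v h2 hd'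
            have hp : par v = T'.par v := by simp only [hpar, if_neg hvn1]
            rw [hp]
            refine ⟨Finset.mem_union_right _ hp1, hp2, ?_⟩
            rw [hdep' v h2, hdep' _ hp1, hp3]
        -- lifting of descendant relations
        have lift₁ : ∀ a u, DDesc T₁.S T₁.par T₁.dep a u → DDesc S par dep a u := by
          intro a u h
          refine h.mono (fun x y hxy => ?_)
          obtain ⟨hy, hy0, hyp, hyd⟩ := hxy
          have hyc : y ≠ c := fun h => hy0 (h ▸ T₁.dep_root)
          have hx : x ∈ T₁.S := hyp ▸ (T₁.parent y hy hy0).1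
          refine ⟨Finset.mem_union_left _ hy, ?_, ?_, ?_⟩
          · rw [hdep1 y hy]; omega
          · simp only [hpar, if_pos hy, if_neg hyc, hyp]
          · rw [hdep1 y hy, hdep1 x hx, hyd]
        have lift' : ∀ a u, DDesc T'.S T'.par T'.dep a u → DDesc S par dep a u := by
          intro a u h
          refine h.mono (fun x y hxy => ?_)
          obtain ⟨hy, hy0, hyp, hyd⟩ := hxy
          have hx : x ∈ T'.S := hyp ▸ (T'.parent y hy hy0).1
          refine ⟨Finset.mem_union_right _ hy, ?_, ?_, ?_⟩
          · rwa [hdep' y hy]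
          · simp only [hpar, if_neg (hdisj y hy), hyp]
          · rw [hdep' y hy, hdep' x hx, hyd]
        -- root_desc
        have hrootdesc : ∀ v ∈ S, DDesc S par dep r v := by
          intro v hv
          rcases hmemS v hv with h1 | h2
          · have hstep : DStep S par dep r c := by
              refine ⟨Finset.mem_union_left _ hcS₁, ?_, ?_, ?_⟩
              · rw [hdep1 c hcS₁]; omega
              · simp only [hpar, if_pos hcS₁, if_pos rfl, if_true]
              · rw [hdep1 c hcS₁, T₁.dep_root, hdeproot]
            exact (ReflTransGen.single hstep).trans (lift₁ c v (T₁.root_desc v h1))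
          · exact lift' r v (T'.root_desc v h2)
        -- downward decompositions
        have down₁ : ∀ a ∈ T₁.S, ∀ u, DDesc S par dep a u →
            DDesc T₁.S T₁.par T₁.dep a u ∧ u ∈ T₁.S := by
          intro a ha u h
          induction h with
          | refl => exact ⟨ReflTransGen.refl, ha⟩
          | @tail x y hax hxy ih =>
              obtain ⟨ih1, ih2⟩ := ih
              obtain ⟨hy, hy0, hyp, hyd⟩ := hxy
              have hy1 : y ∈ T₁.S := by
                rcases hmemS y hy with h1 | h2
                · exact h1
                · exfalso
                  have hyn1 : y ∉ T₁.S := hdisj y h2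
                  have hd' : T'.dep y ≠ 0 := by
                    simp only [hdep, if_neg hyn1] at hy0; exact hy0
                  have hTp := (T'.parent y h2 hd').1
                  simp only [hpar, if_neg hyn1] at hyp
                  rw [← hyp] at ih2
                  exact hdisj _ hTp ih2
              have hyc : y ≠ c := by
                intro h
                subst h
                simp only [hpar, if_pos hy1, if_pos rfl, if_true] at hyp
                rw [← hyp] at ih2
                exact hrS₁ ih2
              have hyd1 : T₁.dep y ≠ 0 := fun h => hyc (T₁.dep_eq_zero y hy1 h)
              refine ⟨ih1.tail ⟨hy1, hyd1, ?_, ?_⟩, hy1⟩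
              · simp only [hpar, if_pos hy1, if_neg hyc] at hyp; exact hyp
              · rw [hdep1 y hy1, hdep1 x ih2] at hyd; omega
        have down' : ∀ a ∈ T'.S, a ≠ r → ∀ u, DDesc S par dep a u →
            DDesc T'.S T'.par T'.dep a u ∧ u ∈ T'.S ∧ u ≠ r := by
          intro a ha har u h
          induction h with
          | refl => exact ⟨ReflTransGen.refl, ha, har⟩
          | @tail x y hax hxy ih =>
              obtain ⟨ih1, ih2, ih3⟩ := ih
              obtain ⟨hy, hy0, hyp, hyd⟩ := hxy
              have hy2 : y ∉ T₁.S := by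
                intro hy1
                by_cases hyc : y = c
                · subst hyc
                  simp only [hpar, if_pos hy1, if_pos rfl, if_true] at hyp
                  exact ih3 hyp.symm
                · have hyd1 : T₁.dep y ≠ 0 := fun h => hyc (T₁.dep_eq_zero y hy1 h)
                  have hTp := (T₁.parent y hy1 hyd1).1
                  simp only [hpar, if_pos hy1, if_neg hyc] at hyp
                  rw [hyp] at hTp
                  exact hdisj x ih2 hTp
              have hy' : y ∈ T'.S := (hmemS y hy).resolve_left hy2
              have hd' : T'.dep y ≠ 0 := by simp only [hdep, if_neg hy2] at hy0; exact hy0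
              have hyr : y ≠ r := fun h => hd' (h ▸ T'.dep_root)
              refine ⟨ih1.tail ⟨hy', hd', ?_, ?_⟩, hy', hyr⟩
              · simp only [hpar, if_neg hy2] at hyp; exact hyp
              · rw [hdep' y hy', hdep' x ih2] at hyd; exact hyd
        -- idx injectivity
        have hinj : Set.InjOn idx S := by
          intro u hu v hv huv
          rw [Finset.mem_coe, hS] at hu hv
          simp only [Finset.mem_union] at hu hv
          by_cases hur : u = r
          · by_cases hvr : v = r
            · rw [hur, hvr]
            · exfalso
              rw [hur, hidxr] at huv
              rcases hv with h1 | h2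
              · have := (hidx1' v h1).1; omega
              · have := hidx2' v h2 hvr; omega
          · by_cases hvr : v = r
            · exfalso
              rw [hvr, hidxr] at huv
              rcases hu with h1 | h2
              · have := (hidx1' u h1).1; omega
              · have := hidx2' u h2 hur; omega
            · rcases hu with hu1 | hu2 <;> rcases hv with hv1 | hv2
              · rw [hidx1 u hu1, hidx1 v hv1] at huv
                exact T₁.idx_inj hu1 hv1 (by omega)
              · exfalso
                have h1 := (hidx1' u hu1).2
                have h2 := hidx2' v hv2 hvr
                omega
              · exfalso
                have h1 := (hidx1' v hv1).2
                have h2 := hidx2' u hu2 hur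
                omega
              · rw [hidx2 u hu2 hur, hidx2 v hv2 hvr] at huv
                exact T'.idx_inj hu2 hv2 (by omega)
        have hcardS : S.card = T₁.S.card + T'.S.card := by
          rw [Finset.card_union_of_disjoint (Finset.disjoint_left.mpr
            (fun x hx hx' => hdisj x hx' hx))]
        have hlt : ∀ v ∈ S, idx v < S.card := by
          intro v hv
          have hS'pos : 0 < T'.S.card := Finset.card_pos.mpr ⟨r, hrS'⟩
          by_cases hvr : v = r
          · rw [hvr, hidxr, hcardS]
            have : 0 < T₁.S.card := Finset.card_pos.mpr ⟨c, hcS₁⟩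
            omega
          · rcases hmemS v hv with h1 | h2
            · have := (hidx1' v h1).2; omega
            · rw [hidx2 v h2 hvr, hcardS]
              have := T'.idx_lt v h2
              omega
        -- key property
        have hkey : ∀ a ∈ S, ∀ u v, DDesc S par dep a u → A u v → v ∈ W →
            DDesc S par dep a v ∨ idx v < idx a := by
          intro a ha u v hdesc hA hvW
          by_cases har : a = r
          · subst har
            left
            have hu : u ∈ S := by
              rcases hdesc.mem_or with h | h
              · exact h ▸ ha
              · exact h
            exact hrootdesc v (hclosed u hu v hvW hA)
          · rcases hmemS a ha with ha1 | ha2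
            · obtain ⟨h₁, hu₁⟩ := down₁ a ha1 u hdesc
              by_cases hvr : v = r
              · right
                rw [hvr, hidxr]
                have := (hidx1' a ha1).1
                omega
              · rcases T₁.key a ha1 u v h₁ hA (Finset.mem_erase.mpr ⟨hvr, hvW⟩) with h | h
                · exact Or.inl (lift₁ a v h)
                · right
                  have hvS₁ : v ∈ T₁.S :=
                    T₁.closed u hu₁ v (Finset.mem_erase.mpr ⟨hvr, hvW⟩) hA
                  rw [hidx1 v hvS₁, hidx1 a ha1]
                  omega
            · obtain ⟨h', hu', hur⟩ := down' a ha2 har u hdesc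
              by_cases hvS₁ : v ∈ T₁.S
              · right
                have h1 := (hidx1' v hvS₁).2
                have h2 := hidx2' a ha2 har
                omega
              · rcases T'.key a ha2 u v h' hA (Finset.mem_sdiff.mpr ⟨hvW, hvS₁⟩) with h | h
                · exact Or.inl (lift' a v h)
                · right
                  have hvS' : v ∈ T'.S :=
                    T'.closed u hu' v (Finset.mem_sdiff.mpr ⟨hvW, hvS₁⟩) hA
                  by_cases hvr : v = r
                  · rw [hvr, hidxr]
                    have := hidx2' a ha2 har
                    omega
                  · rw [hidx2 v hvS' hvr, hidx2 a ha2 har]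
                    omega
        exact ⟨⟨S, idx, par, dep, hrmem, hsubset, hclosed, hinj, hidxr, hlt,
          hdeproot, hdepzero, hparent, hrootdesc, hkey⟩⟩
      · -- no out-neighbour: the singleton tree
        push_neg at hex
        refine ⟨⟨{r}, fun _ => 0, id, fun _ => 0, Finset.mem_singleton_self r,
          Finset.singleton_subset_iff.mpr hr, ?_, ?_, rfl, ?_, rfl, ?_, ?_, ?_, ?_⟩⟩
        · intro u hu v hv hA
          rw [Finset.mem_singleton] at hu
          subst hu
          by_contra hne
          rw [Finset.mem_singleton] at hne
          exact (hex v hv hne) hA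
        · intro u hu v hv _
          rw [Finset.mem_coe, Finset.mem_singleton] at hu hv
          rw [hu, hv]
        · intro v hv
          rw [Finset.mem_singleton] at hv
          subst hv
          simp
        · intro v hv h0
          rwa [Finset.mem_singleton] at hv
        · intro v _ h0; exact absurd rfl h0
        · intro v hv
          rw [Finset.mem_singleton] at hv
          subst hv
          exact ReflTransGen.refl
        · intro a ha u v hdesc hA hvW
          rw [Finset.mem_singleton] at ha
          subst ha
          have hu : u = a := by
            rcases hdesc.mem_or with h | h
            · exact h
            · rwa [Finset.mem_singleton] at h
          subst hu
          by_cases hvu : v = u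
          · subst hvu; exact Or.inl ReflTransGen.refl
          · exact absurd hA (hex v hvW hvu)

lemma forest_exists [DecidableEq V] (A : V → V → Prop) :
    ∀ n (W : Finset V), W.card ≤ n → Nonempty (DFSForest A W) := by
  intro n
  induction n with
  | zero =>
      intro W hcard
      have hW : W = ∅ := Finset.card_eq_zero.mp (by omega)
      subst hW
      exact ⟨⟨fun _ => 0, id, fun _ => 0, fun u hu => absurd hu (by simp),
        fun v hv => absurd hv (by simp), fun v hv => absurd hv (by simp),
        fun a ha => absurd ha (by simp)⟩⟩
  | succ n IH =>
      intro W hcard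
      rcases Finset.eq_empty_or_nonempty W with hW | ⟨r, hr⟩
      · subst hW
        exact ⟨⟨fun _ => 0, id, fun _ => 0, fun u hu => absurd hu (by simp),
          fun v hv => absurd hv (by simp), fun v hv => absurd hv (by simp),
          fun a ha => absurd ha (by simp)⟩⟩
      · obtain ⟨T⟩ := dfs_exists A (n + 1) W hcard r hr
        have hTsub : T.S ⊆ W := T.subset
        have hcard2 : (W \ T.S).card ≤ n := by
          have h1 : (W \ T.S).card = W.card - T.S.card := Finset.card_sdiff_of_subset hTsub
          have h2 : 0 < T.S.card := Finset.card_pos.mpr ⟨r, T.root_mem⟩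
          omega
        obtain ⟨F⟩ := IH (W \ T.S) hcard2
        set dep : V → ℕ := fun v => if v ∈ T.S then T.dep v else F.dep v with hdep
        set par : V → V := fun v => if v ∈ T.S then T.par v else F.par v with hpar
        set idx : V → ℕ :=
          fun v => if v ∈ T.S then T.idx v else T.S.card + F.idx v with hidx
        have hsplit : ∀ v ∈ W, v ∈ T.S ∨ v ∈ W \ T.S := by
          intro v hv
          by_cases h : v ∈ T.S
          · exact Or.inl h
          · exact Or.inr (Finset.mem_sdiff.mpr ⟨hv, h⟩)
        have hdisj : ∀ x, x ∈ W \ T.S → x ∉ T.S := fun x hx => (Finset.mem_sdiff.mp hx).2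
        have hdepT : ∀ v ∈ T.S, dep v = T.dep v := fun v hv => if_pos hv
        have hdepF : ∀ v ∈ W \ T.S, dep v = F.dep v := fun v hv => if_neg (hdisj v hv)
        have hidxT : ∀ v ∈ T.S, idx v = T.idx v := fun v hv => if_pos hv
        have hidxF : ∀ v ∈ W \ T.S, idx v = T.S.card + F.idx v :=
          fun v hv => if_neg (hdisj v hv)
        have hparent : ∀ v ∈ W, dep v ≠ 0 →
            par v ∈ W ∧ A (par v) v ∧ dep v = dep (par v) + 1 := by
          intro v hv hv0
          rcases hsplit v hv with h1 | h2
          · have hd : T.dep v ≠ 0 := by rwa [hdepT v h1] at hv0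
            obtain ⟨hp1, hp2, hp3⟩ := T.parent v h1 hd
            have hp : par v = T.par v := if_pos h1
            rw [hp]
            exact ⟨hTsub hp1, hp2, by rw [hdepT v h1, hdepT _ hp1, hp3]⟩
          · have hd : F.dep v ≠ 0 := by rwa [hdepF v h2] at hv0
            obtain ⟨hp1, hp2, hp3⟩ := F.parent v h2 hd
            have hp : par v = F.par v := if_neg (hdisj v h2)
            rw [hp]
            exact ⟨(Finset.mem_sdiff.mp hp1).1, hp2,
              by rw [hdepF v h2, hdepF _ hp1, hp3]⟩
        have liftT : ∀ a u, DDesc T.S T.par T.dep a u → DDesc W par dep a u := by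
          intro a u h
          refine h.mono (fun x y hxy => ?_)
          obtain ⟨hy, hy0, hyp, hyd⟩ := hxy
          have hx : x ∈ T.S := hyp ▸ (T.parent y hy hy0).1
          refine ⟨hTsub hy, ?_, ?_, ?_⟩
          · rwa [hdepT y hy]
          · rw [hpar]; simpa only [if_pos hy] using hyp
          · rw [hdepT y hy, hdepT x hx, hyd]
        have liftF : ∀ a u, DDesc (W \ T.S) F.par F.dep a u → DDesc W par dep a u := by
          intro a u h
          refine h.mono (fun x y hxy => ?_)
          obtain ⟨hy, hy0, hyp, hyd⟩ := hxy
          have hx : x ∈ W \ T.S := hyp ▸ (F.parent y hy hy0).1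
          refine ⟨(Finset.mem_sdiff.mp hy).1, ?_, ?_, ?_⟩
          · rwa [hdepF y hy]
          · rw [hpar]; simpa only [if_neg (hdisj y hy)] using hyp
          · rw [hdepF y hy, hdepF x hx, hyd]
        have downT : ∀ a ∈ T.S, ∀ u, DDesc W par dep a u →
            DDesc T.S T.par T.dep a u ∧ u ∈ T.S := by
          intro a ha u h
          induction h with
          | refl => exact ⟨ReflTransGen.refl, ha⟩
          | @tail x y hax hxy ih =>
              obtain ⟨ih1, ih2⟩ := ih
              obtain ⟨hy, hy0, hyp, hyd⟩ := hxy
              have hy1 : y ∈ T.S := by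
                by_contra hyn
                have hy2 : y ∈ W \ T.S := Finset.mem_sdiff.mpr ⟨hy, hyn⟩
                have hd : F.dep y ≠ 0 := by
                  simp only [hdep, if_neg hyn] at hy0; exact hy0
                have hFp := (F.parent y hy2 hd).1
                simp only [hpar, if_neg hyn] at hyp
                rw [hyp] at hFp
                exact hdisj x hFp ih2
              have hd : T.dep y ≠ 0 := by
                simp only [hdep, if_pos hy1] at hy0; exact hy0
              refine ⟨ih1.tail ⟨hy1, hd, ?_, ?_⟩, hy1⟩
              · simp only [hpar, if_pos hy1] at hyp; exact hyp
              · rw [hdepT y hy1, hdepT x ih2] at hyd; exact hyd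
        have downF : ∀ a ∈ W \ T.S, ∀ u, DDesc W par dep a u →
            DDesc (W \ T.S) F.par F.dep a u ∧ u ∈ W \ T.S := by
          intro a ha u h
          induction h with
          | refl => exact ⟨ReflTransGen.refl, ha⟩
          | @tail x y hax hxy ih =>
              obtain ⟨ih1, ih2⟩ := ih
              obtain ⟨hy, hy0, hyp, hyd⟩ := hxy
              have hy2 : y ∉ T.S := by
                intro hy1
                have hd : T.dep y ≠ 0 := by
                  simp only [hdep, if_pos hy1] at hy0; exact hy0
                have hTp := (T.parent y hy1 hd).1
                simp only [hpar, if_pos hy1] at hyp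
                rw [hyp] at hTp
                exact hdisj x ih2 hTp
              have hy' : y ∈ W \ T.S := Finset.mem_sdiff.mpr ⟨hy, hy2⟩
              have hd : F.dep y ≠ 0 := by
                simp only [hdep, if_neg hy2] at hy0; exact hy0
              refine ⟨ih1.tail ⟨hy', hd, ?_, ?_⟩, hy'⟩
              · simp only [hpar, if_neg hy2] at hyp; exact hyp
              · rw [hdepF y hy', hdepF x ih2] at hyd; exact hyd
        have hcardW : W.card = T.S.card + (W \ T.S).card := by
          have := Finset.card_sdiff_of_subset hTsub
          have := Finset.card_le_card hTsub
          omega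
        have hinj : Set.InjOn idx W := by
          intro u hu v hv huv
          rw [Finset.mem_coe] at hu hv
          rcases hsplit u hu with hu1 | hu2 <;> rcases hsplit v hv with hv1 | hv2
          · rw [hidxT u hu1, hidxT v hv1] at huv
            exact T.idx_inj hu1 hv1 huv
          · exfalso
            rw [hidxT u hu1, hidxF v hv2] at huv
            have := T.idx_lt u hu1
            omega
          · exfalso
            rw [hidxF u hu2, hidxT v hv1] at huv
            have := T.idx_lt v hv1
            omega
          · rw [hidxF u hu2, hidxF v hv2] at huv
            exact F.idx_inj hu2 hv2 (by omega)
        have hlt : ∀ v ∈ W, idx v < W.card := by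
          intro v hv
          rcases hsplit v hv with h1 | h2
          · rw [hidxT v h1, hcardW]
            have := T.idx_lt v h1
            omega
          · rw [hidxF v h2, hcardW]
            have := F.idx_lt v h2
            omega
        have hkey : ∀ a ∈ W, ∀ u v, DDesc W par dep a u → A u v → v ∈ W →
            DDesc W par dep a v ∨ idx v < idx a := by
          intro a ha u v hdesc hA hvW
          rcases hsplit a ha with ha1 | ha2
          · obtain ⟨h₁, hu₁⟩ := downT a ha1 u hdesc
            rcases T.key a ha1 u v h₁ hA hvW with h | h
            · exact Or.inl (liftT a v h)
            · right
              have hvS : v ∈ T.S := T.closed u hu₁ v hvW hA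
              rw [hidxT v hvS, hidxT a ha1]
              exact h
          · obtain ⟨h₂, hu₂⟩ := downF a ha2 u hdesc
            by_cases hvS : v ∈ T.S
            · right
              rw [hidxT v hvS, hidxF a ha2]
              have := T.idx_lt v hvS
              omega
            · have hv' : v ∈ W \ T.S := Finset.mem_sdiff.mpr ⟨hvW, hvS⟩
              rcases F.key a ha2 u v h₂ hA hv' with h | h
              · exact Or.inl (liftF a v h)
              · right
                rw [hidxF v hv', hidxF a ha2]
                omega
        exact ⟨⟨idx, par, dep, hinj, hlt, hparent, hkey⟩⟩

lemma desc_path {A : V → V → Prop} {S : Finset V} {par : V → V} {dep : V → ℕ}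
    (hpar : ∀ v ∈ S, dep v ≠ 0 → A (par v) v) {a u : V} (h : DDesc S par dep a u) :
    ∃ m, ∃ f : ℕ → V, f 0 = a ∧ f m = u ∧ (∀ i < m, A (f i) (f (i + 1))) ∧
      ∀ i ≤ m, dep (f i) = dep a + i := by
  induction h with
  | refl =>
      exact ⟨0, fun _ => a, rfl, rfl, by omega, by intro i hi; interval_cases i; simp⟩
  | @tail b y hab hbc ih =>
      obtain ⟨m, f, hf0, hfm, harc, hdep⟩ := ih
      refine ⟨m + 1, fun i => if i ≤ m then f i else y, by simp [hf0], by simp, ?_, ?_⟩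
      · intro i hi
        rcases lt_or_eq_of_le (Nat.lt_succ_iff.mp hi) with h | h
        · simpa only [if_pos h.le, if_pos (Nat.succ_le_of_lt h)] using harc i h
        · subst h
          show A (if i ≤ i then f i else y) (if i + 1 ≤ i then f (i + 1) else y)
          rw [if_pos le_rfl, if_neg (by omega : ¬ i + 1 ≤ i), hfm, ← hbc.2.2.1]
          exact hpar _ hbc.1 hbc.2.1
      · intro i hi
        by_cases h : i ≤ m
        · simpa only [if_pos h] using hdep i h
        · have : i = m + 1 := by omega
          subst this
          simp only [if_neg h]
          show dep y = _
          rw [hbc.2.2.2, ← hfm, hdep m le_rfl]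
          omega

end DFSdev

theorem stmt_2 {V : Type*} [Fintype V] (A : V → V → Prop) (hloopless : Irreflexive A)
    (g c : ℕ)
    (hg : HasCycleLen A g) (hgmin : ∀ ℓ, HasCycleLen A ℓ → g ≤ ℓ)
    (hc : HasCycleLen A c) (hcmax : ∀ ℓ, HasCycleLen A ℓ → ℓ ≤ c) :
    dichromatic A ≤ ⌈((c : ℚ) - 1) / ((g : ℚ) - 1)⌉₊ + 1 := by
  classical
  have hg2 : 2 ≤ g := hg.1
  have hgc : g ≤ c := hgmin c hc
  set K : ℕ := ⌈((c : ℚ) - 1) / ((g : ℚ) - 1)⌉₊ with hK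
  set k : ℕ := K + 1 with hk
  -- the key numerical fact
  have hcK : c - 1 ≤ K * (g - 1) := by
    have hgpos : (0 : ℚ) < (g : ℚ) - 1 := by
      have : (2 : ℚ) ≤ (g : ℚ) := by exact_mod_cast hg2
      linarith
    have h1 : ((c : ℚ) - 1) / ((g : ℚ) - 1) ≤ (K : ℚ) := Nat.le_ceil _
    have h2 : (c : ℚ) - 1 ≤ (K : ℚ) * ((g : ℚ) - 1) := by
      rw [div_le_iff₀ hgpos] at h1
      exact h1
    have h3 : ((c - 1 : ℕ) : ℚ) ≤ ((K * (g - 1) : ℕ) : ℚ) := by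
      rw [Nat.cast_sub (by omega : 1 ≤ c), Nat.cast_mul, Nat.cast_sub (by omega : 1 ≤ g)]
      push_cast
      exact h2
    exact_mod_cast h3
  have hkpos : 0 < k := by omega
  have hg1pos : 0 < g - 1 := by omega
  -- build the DFS forest on the whole vertex set
  obtain ⟨F⟩ := forest_exists A (Finset.univ : Finset V).card Finset.univ le_rfl
  set col : V → Fin k := fun v => ⟨(F.dep v / (g - 1)) % k, Nat.mod_lt _ hkpos⟩ with hcol
  apply Nat.sInf_le
  refine ⟨col, ?_⟩
  intro i ℓ hcyc
  obtain ⟨hl2, u, huinj, humem, huarc⟩ := hcyc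
  haveI : NeZero ℓ := ⟨by omega⟩
  haveI : Fact (1 < ℓ) := ⟨by omega⟩
  -- the vertex of minimal index on the cycle
  obtain ⟨i₀, -, hmin⟩ := Finset.exists_min_image (Finset.univ : Finset (ZMod ℓ))
    (fun j => F.idx (u j)) ⟨0, Finset.mem_univ 0⟩
  -- every cycle vertex is a descendant of the minimal one
  have hdesc : ∀ m : ℕ, DDesc Finset.univ F.par F.dep (u i₀) (u (i₀ + (m : ZMod ℓ))) := by
    intro m
    induction m with
    | zero => simp only [Nat.cast_zero, add_zero]; exact ReflTransGen.refl
    | succ m ih =>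
        have harc := huarc (i₀ + (m : ZMod ℓ))
        rcases F.key (u i₀) (Finset.mem_univ _) _ _ ih harc (Finset.mem_univ _) with h | h
        · have hcast : ((m + 1 : ℕ) : ZMod ℓ) = (m : ZMod ℓ) + 1 := by push_cast; ring
          rw [hcast, ← add_assoc]
          exact h
        · exact absurd h (not_lt.mpr (hmin _ (Finset.mem_univ _)))
  have hall : ∀ j, DDesc Finset.univ F.par F.dep (u i₀) (u j) := by
    intro j
    have h := hdesc ((j - i₀).val)
    rwa [show (((j - i₀).val : ℕ) : ZMod ℓ) = j - i₀ from ZMod.natCast_rightInverse _,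
      show i₀ + (j - i₀) = j from by ring] at h
  -- the predecessor of the minimal vertex on the cycle
  have harc0 : A (u (i₀ - 1)) (u i₀) := by
    have h := huarc (i₀ - 1)
    rwa [show i₀ - 1 + 1 = i₀ from by ring] at h
  have hne : u (i₀ - 1) ≠ u i₀ := by
    intro h
    have h2 := huinj h
    have h3 : (1 : ZMod ℓ) = 0 := by
      have := sub_eq_self.mp h2
      exact this
    exact one_ne_zero h3
  obtain ⟨m, f, hf0, hfm, hfarc, hfdep⟩ :=
    desc_path (fun v _ hv0 => (F.parent v (Finset.mem_univ v) hv0).2.1) (hall (i₀ - 1))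
  have hm0 : m ≠ 0 := by
    intro h
    subst h
    exact hne (hfm.symm.trans hf0)
  haveI : NeZero (m + 1) := ⟨by omega⟩
  haveI : Fact (1 < m + 1) := ⟨by omega⟩
  -- the tree path plus the back arc yields a directed cycle of length m + 1
  have hcyc2 : HasCycleLen A (m + 1) := by
    refine ⟨by omega, fun j => f j.val, ?_, fun j => Set.mem_univ _, ?_⟩
    · intro j1 j2 h
      have d1 := hfdep j1.val (by have := ZMod.val_lt j1; omega)
      have d2 := hfdep j2.val (by have := ZMod.val_lt j2; omega)
      have heq : F.dep (f j1.val) = F.dep (f j2.val) := congrArg F.dep h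
      have : j1.val = j2.val := by omega
      exact ZMod.val_injective _ this
    · intro j
      have hv1 : (j + 1).val = (j.val + 1) % (m + 1) := by
        rw [ZMod.val_add, ZMod.val_one]
      by_cases hj : j.val = m
      · have h0 : (j + 1).val = 0 := by rw [hv1, hj, Nat.mod_self]
        show A (f j.val) (f (j + 1).val)
        rw [h0, hj, hfm, hf0]
        exact harc0
      · have hlt : j.val < m := by have := ZMod.val_lt j; omega
        have h1 : (j + 1).val = j.val + 1 := by
          rw [hv1]
          exact Nat.mod_eq_of_lt (by omega)
        show A (f j.val) (f (j + 1).val)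
        rw [h1]
        exact hfarc j.val hlt
  have hg_le : g ≤ m + 1 := hgmin _ hcyc2
  have hle_c : m + 1 ≤ c := hcmax _ hcyc2
  -- the two endpoints of the back arc have the same colour: contradiction
  have hcol1 : col (u (i₀ - 1)) = i := humem (i₀ - 1)
  have hcol2 : col (u i₀) = i := humem i₀
  have hcolnat : (F.dep (u (i₀ - 1)) / (g - 1)) % k = (F.dep (u i₀) / (g - 1)) % k := by
    have := hcol1.trans hcol2.symm
    exact congrArg Fin.val this
  have hdb : F.dep (u (i₀ - 1)) = F.dep (u i₀) + m := by
    have h := hfdep m le_rfl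
    rw [hfm] at h
    exact h
  set p := F.dep (u i₀) with hp
  have hm1 : g - 1 ≤ m := by omega
  have hm2 : m ≤ c - 1 := by omega
  have hdiv1 : p / (g - 1) + 1 ≤ (p + m) / (g - 1) := by
    calc p / (g - 1) + 1 = (p + (g - 1)) / (g - 1) := (Nat.add_div_right p hg1pos).symm
    _ ≤ (p + m) / (g - 1) := Nat.div_le_div_right (by omega)
  have hdiv2 : (p + m) / (g - 1) ≤ p / (g - 1) + K := by
    calc (p + m) / (g - 1) ≤ (p + K * (g - 1)) / (g - 1) :=
          Nat.div_le_div_right (by omega)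
    _ = p / (g - 1) + K := Nat.add_mul_div_right p K hg1pos
  set bp := p / (g - 1) with hbp
  set bq := (p + m) / (g - 1) with hbq
  have hmod : bq % k = bp % k := by
    rw [hbq, hbp, ← hdb]
    exact hcolnat
  set d := bq - bp with hd
  have hd1 : 1 ≤ d := by omega
  have hd2 : d ≤ K := by omega
  have hmodeq : Nat.ModEq k (bp + d) (bp + 0) := by
    rw [add_zero]
    show (bp + d) % k = bp % k
    rw [show bp + d = bq from by omega]
    exact hmod
  have hdvd : k ∣ d := by
    have h := (Nat.ModEq.add_left_cancel' bp hmodeq)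
    exact (Nat.modEq_zero_iff_dvd).mp h
  have := Nat.le_of_dvd (by omega) hdvd
  omega
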